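/- Let f be a cusp form of weight k for SL₂(ℤ) with Fourier coefficients (a_n)_{n≥1}, and let s be a complex number such that the series ∑_{n=1}^∞ |a_n| n^{-Re(s)} converges. Then the Mellin integral ∫_0^∞ f(it) t^{s} dt/t converges and equals (2π)^{-s} Γ(s) ∑_{n=1}^∞ a_n n^{-s}. -/

import Mathlib

open MeasureTheory

/-- The function `t ↦ f(it)` on `(0,∞)` associated with a cusp form `f` (extended by `0`
to the rest of the real line). -/
noncomputable def cuspFormOnImaginaryAxis (k : ℤ) (f : CuspForm (MonoidHom.range (Matrix.SpecialLinearGroup.mapGL ℝ : Matrix.SpecialLinearGroup (Fin 2) ℤ →* Matrix.GeneralLinearGroup (Fin 2) ℝ)) k) (t : ℝ) : ℂ :=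
  if ht : 0 < t then f ⟨Complex.I * t, by simpa using ht⟩ else 0

namespace CuspFormMellinAux

open Complex Filter Set Real

open scoped Topology

/-- Integrability of a series from summability of the integrals of norms. -/
lemma integrable_tsum' {α : Type*} [MeasurableSpace α] {μ : Measure α} {F : ℕ → α → ℂ}
    (hF_int : ∀ i, Integrable (F i) μ)
    (hF_sum : Summable fun i => ∫ a, ‖F i a‖ ∂μ) :
    Integrable (fun a => ∑' i, F i a) μ := by
  have h1 : ∀ i, AEMeasurable (fun x => (‖F i x‖₊ : ENNReal)) μ := fun i => (hF_int i).1.enorm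
  have key : ∫⁻ a, ∑' i, (‖F i a‖₊ : ENNReal) ∂μ ≠ ⊤ := by
    rw [lintegral_tsum h1]
    have h2 : ∀ i : ℕ, ∫⁻ a, (‖F i a‖₊ : ENNReal) ∂μ = ENNReal.ofReal (∫ a, ‖F i a‖ ∂μ) :=
      fun i => (ofReal_integral_norm_eq_lintegral_enorm (hF_int i)).symm
    rw [funext h2, ← ENNReal.ofReal_tsum_of_nonneg
      (fun i => integral_nonneg fun a => norm_nonneg _) hF_sum]
    exact ENNReal.ofReal_ne_top
  have hhh : ∀ᵐ a ∂μ, Summable fun i => ‖F i a‖ := by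
    filter_upwards [ae_lt_top' (AEMeasurable.ennreal_tsum h1) key] with a ha
    have := ENNReal.tsum_coe_ne_top_iff_summable_coe.mp ha.ne
    simpa [coe_nnnorm] using this
  constructor
  · refine aestronglyMeasurable_of_tendsto_ae (f := fun n a => ∑ i ∈ Finset.range n, F i a)
      atTop (fun n => ?_) ?_
    · exact Finset.aestronglyMeasurable_fun_sum _ fun i _ => (hF_int i).1
    · filter_upwards [hhh] with a ha
      exact ha.of_norm.hasSum.tendsto_sum_nat
  · refine lt_of_le_of_lt (lintegral_mono_ae ?_) (lt_top_iff_ne_top.2 key)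
    filter_upwards [hhh] with a ha
    have h3 : ‖∑' i, F i a‖₊ ≤ ∑' i, ‖F i a‖₊ := by
      apply nnnorm_tsum_le
      simpa [← NNReal.summable_coe, coe_nnnorm] using ha
    have hsnn : Summable fun i => ‖F i a‖₊ := by
      simpa [← NNReal.summable_coe, coe_nnnorm] using ha
    calc (‖∑' i, F i a‖₊ : ENNReal) ≤ ((∑' i, ‖F i a‖₊ : NNReal) : ENNReal) := by
          exact_mod_cast h3
      _ = ∑' i, (‖F i a‖₊ : ENNReal) := ENNReal.coe_tsum hsnn

lemma mellin_integrable {a : ℕ → ℂ} {p : ℕ → ℝ} {F : ℝ → ℂ} {s : ℂ}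
    (hp : ∀ i, a i = 0 ∨ 0 < p i) (hs : 0 < s.re)
    (hF : ∀ t ∈ Ioi 0, HasSum (fun i ↦ a i * rexp (-p i * t)) (F t))
    (h_sum : Summable fun i ↦ ‖a i‖ / (p i) ^ s.re) :
    IntegrableOn (fun t : ℝ => F t * (t : ℂ) ^ (s - 1)) (Ioi 0) := by
  have hF_int : ∀ i, Integrable (fun t : ℝ => (t : ℂ) ^ (s - 1) * (a i * rexp (-p i * t)))
      (volume.restrict (Ioi 0)) := by
    intro i
    rcases hp i with hai | hpi
    · simp only [hai, zero_mul, mul_zero]; exact integrable_zero _ _ _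
    simp_rw [← mul_assoc, mul_comm _ (a i), mul_assoc]
    have := Complex.GammaIntegral_convergent hs
    rw [← mul_zero (p i), ← integrableOn_Ioi_comp_mul_left_iff _ _ hpi] at this
    refine (IntegrableOn.congr_fun (this.const_mul (1 / (p i : ℂ) ^ (s - 1)))
      (fun t (ht : 0 < t) ↦ ?_) measurableSet_Ioi).const_mul _
    simp_rw [mul_comm (↑(rexp _) : ℂ), ← mul_assoc, neg_mul, ofReal_mul]
    rw [mul_cpow_ofReal_nonneg hpi.le ht.le, ← mul_assoc, one_div, inv_mul_cancel₀, one_mul]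
    rw [Ne, cpow_eq_zero_iff, not_and_or]
    exact Or.inl (ofReal_ne_zero.mpr hpi.ne')
  have hF_sum : Summable fun i =>
      ∫ t in Ioi (0 : ℝ), ‖(t : ℂ) ^ (s - 1) * (a i * rexp (-p i * t))‖ := by
    apply Summable.of_norm
    convert h_sum.mul_left (Real.Gamma s.re) using 2 with i
    · rfl
    simp_rw [← mul_assoc, mul_comm _ (a i), mul_assoc, norm_mul (a i), integral_const_mul]
    rw [← mul_div_assoc, mul_comm (Real.Gamma _), mul_div_assoc, norm_mul ‖a i‖, norm_norm]
    rcases hp i with hai | hpi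
    · simp only [hai, norm_zero, zero_mul]
    congr 1
    have := Real.integral_rpow_mul_exp_neg_mul_Ioi hs hpi
    simp_rw [← neg_mul (p i), one_div, inv_rpow hpi.le, ← div_eq_inv_mul] at this
    rw [norm_of_nonneg (integral_nonneg (fun _ ↦ norm_nonneg _)), ← this]
    refine setIntegral_congr_fun measurableSet_Ioi (fun t ht ↦ ?_)
    rw [norm_mul, norm_real, Real.norm_eq_abs, Real.abs_exp,
      norm_cpow_eq_rpow_re_of_pos ht, sub_re, one_re]
  have h_int := integrable_tsum' hF_int hF_sum
  refine h_int.congr ?_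
  rw [Filter.EventuallyEq, ae_restrict_iff' measurableSet_Ioi]
  filter_upwards with t ht
  rw [tsum_mul_left, (hF t ht).tsum_eq, mul_comm]

lemma main_pos (k : ℤ) (f : CuspForm (MonoidHom.range (Matrix.SpecialLinearGroup.mapGL ℝ : Matrix.SpecialLinearGroup (Fin 2) ℤ →* Matrix.GeneralLinearGroup (Fin 2) ℝ)) k) (a : ℕ → ℂ) (s : ℂ)
    (ha0 : a 0 = 0)
    (hf : ∀ z : UpperHalfPlane,
      HasSum (fun n : ℕ => a n * Complex.exp (2 * Real.pi * Complex.I * n * z)) (f z))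
    (hs : Summable fun n : ℕ => ‖a n‖ * (n : ℝ) ^ (-s.re))
    (hs0 : 0 < s.re) :
    IntegrableOn (fun t : ℝ => cuspFormOnImaginaryAxis k f t * (t : ℂ) ^ (s - 1))
        (Set.Ioi 0) ∧
      ∫ t in Set.Ioi (0 : ℝ), cuspFormOnImaginaryAxis k f t * (t : ℂ) ^ (s - 1) =
        (2 * Real.pi : ℂ) ^ (-s) * Complex.Gamma s * ∑' n : ℕ, a n * (n : ℂ) ^ (-s) := by
  have hp : ∀ n : ℕ, a n = 0 ∨ 0 < 2 * π * n := by
    intro n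
    rcases Nat.eq_zero_or_pos n with h | h
    · exact Or.inl (h ▸ ha0)
    · right
      have : (0 : ℝ) < n := by exact_mod_cast h
      positivity
  have hF : ∀ t ∈ Ioi (0 : ℝ), HasSum (fun n : ℕ => a n * (rexp (-(2 * π * n) * t) : ℂ))
      (cuspFormOnImaginaryAxis k f t) := by
    intro t ht
    have ht' : 0 < t := ht
    have h := hf ⟨Complex.I * t, by simpa using ht'⟩
    rw [cuspFormOnImaginaryAxis, dif_pos ht']
    have hterm : (fun n : ℕ => a n *
        Complex.exp (2 * Real.pi * Complex.I * n *
          ((⟨Complex.I * t, by simpa using ht'⟩ : UpperHalfPlane) : ℂ))) =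
        fun n : ℕ => a n * (rexp (-(2 * π * n) * t) : ℂ) := by
      funext n
      congr 1
      rw [show ((⟨Complex.I * t, by simpa using ht'⟩ : UpperHalfPlane) : ℂ) = Complex.I * t
        from rfl]
      rw [show (2 * (Real.pi : ℂ) * Complex.I * n * (Complex.I * t)) =
        (Complex.I * Complex.I) * (2 * Real.pi * n * t) by ring, Complex.I_mul_I,
        Complex.ofReal_exp]
      congr 1
      push_cast
      ring
    rw [← hterm]
    exact h
  have key : ∀ n : ℕ, ‖a n‖ / (2 * π * n) ^ s.re =
      (2 * π : ℝ) ^ (-s.re) * (‖a n‖ * (n : ℝ) ^ (-s.re)) := by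
    intro n
    rcases Nat.eq_zero_or_pos n with h | h
    · simp [h, ha0]
    have hn : (0 : ℝ) < n := by exact_mod_cast h
    rw [Real.mul_rpow (by positivity : (0:ℝ) ≤ 2 * π) hn.le,
      Real.rpow_neg (by positivity : (0:ℝ) ≤ 2 * π), Real.rpow_neg hn.le,
      div_eq_mul_inv, mul_inv]
    ring
  have h_sum : Summable fun n : ℕ => ‖a n‖ / (2 * π * n) ^ s.re :=
    ((hs.mul_left ((2 * π : ℝ) ^ (-s.re))).congr fun n => (key n).symm)
  refine ⟨mellin_integrable hp hs0 hF h_sum, ?_⟩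
  have H := hasSum_mellin hp hs0 hF h_sum
  have hterm2 : (fun n : ℕ => Complex.Gamma s * a n / ((2 * π * n : ℝ) : ℂ) ^ s) =
      fun n : ℕ => (2 * Real.pi : ℂ) ^ (-s) * Complex.Gamma s * (a n * (n : ℂ) ^ (-s)) := by
    funext n
    rcases Nat.eq_zero_or_pos n with h | h
    · simp [h, ha0]
    have hn : (0 : ℝ) < n := by exact_mod_cast h
    rw [show ((2 * π * (n : ℝ) : ℝ) : ℂ) = ((2 * π : ℝ) : ℂ) * ((n : ℝ) : ℂ) by push_cast; ring,
      mul_cpow_ofReal_nonneg (by positivity : (0:ℝ) ≤ 2 * π) hn.le, cpow_neg, cpow_neg]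
    push_cast
    ring
  rw [hterm2] at H
  have hmel : ∫ t in Set.Ioi (0 : ℝ), cuspFormOnImaginaryAxis k f t * (t : ℂ) ^ (s - 1) =
      mellin (cuspFormOnImaginaryAxis k f) s := by
    rw [mellin]
    simp_rw [smul_eq_mul, mul_comm]
  rw [hmel, ← H.tsum_eq, tsum_mul_left]

/-- The function `f(x+iy)` (junk value `0` if `y ≤ 0`). -/
noncomputable def fAt (k : ℤ) (f : CuspForm (MonoidHom.range (Matrix.SpecialLinearGroup.mapGL ℝ : Matrix.SpecialLinearGroup (Fin 2) ℤ →* Matrix.GeneralLinearGroup (Fin 2) ℝ)) k) (x y : ℝ) : ℂ :=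
  if hy : 0 < y then f ⟨x + Complex.I * y, by simpa using hy⟩ else 0

/-- The boundary function `∑ aₙ e^{2πinx}`. -/
noncomputable def gfun (a : ℕ → ℂ) (x : ℝ) : ℂ :=
  ∑' n : ℕ, a n * Complex.exp (2 * Real.pi * Complex.I * n * x)

lemma norm_term (a : ℕ → ℂ) (n : ℕ) (z : ℂ) :
    ‖a n * Complex.exp (2 * Real.pi * Complex.I * n * z)‖
      = ‖a n‖ * rexp (-(2 * π * n) * z.im) := by
  rw [norm_mul]
  congr 1
  rw [Complex.norm_exp]
  congr 1
  rw [show (2 * (Real.pi : ℂ) * Complex.I * n * z) = (((2 * π * n : ℝ)) : ℂ) * z * Complex.I by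
    push_cast; ring, Complex.mul_I_re]
  simp [Complex.mul_im]

lemma norm_f_le {k : ℤ} (f : CuspForm (MonoidHom.range (Matrix.SpecialLinearGroup.mapGL ℝ : Matrix.SpecialLinearGroup (Fin 2) ℤ →* Matrix.GeneralLinearGroup (Fin 2) ℝ)) k) {a : ℕ → ℂ} (ha0 : a 0 = 0)
    (hf : ∀ z : UpperHalfPlane,
      HasSum (fun n : ℕ => a n * Complex.exp (2 * Real.pi * Complex.I * n * z)) (f z))
    (hsum : Summable fun n => ‖a n‖) (z : UpperHalfPlane) :
    ‖f z‖ ≤ (∑' n : ℕ, ‖a n‖) * rexp (-(2 * π) * z.im) := by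
  have hterm : ∀ n : ℕ, ‖a n * Complex.exp (2 * Real.pi * Complex.I * n * (z : ℂ))‖ ≤
      ‖a n‖ * rexp (-(2 * π) * z.im) := by
    intro n
    rw [norm_term, UpperHalfPlane.coe_im]
    rcases Nat.eq_zero_or_pos n with h | h
    · simp [h, ha0]
    have h1 : (1 : ℝ) ≤ n := by exact_mod_cast h
    have him := z.im_pos
    refine mul_le_mul_of_nonneg_left (Real.exp_le_exp.mpr ?_) (norm_nonneg _)
    nlinarith [mul_nonneg (mul_nonneg (by positivity : (0:ℝ) ≤ 2 * π) him.le)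
      (sub_nonneg.mpr h1)]
  have hsum2 : Summable fun n : ℕ => ‖a n‖ * rexp (-(2 * π) * z.im) := hsum.mul_right _
  have hsum1 : Summable fun n : ℕ =>
      ‖a n * Complex.exp (2 * Real.pi * Complex.I * n * (z : ℂ))‖ :=
    Summable.of_nonneg_of_le (fun n => norm_nonneg _) hterm hsum2
  calc ‖f z‖ = ‖∑' n : ℕ, a n * Complex.exp (2 * Real.pi * Complex.I * n * (z : ℂ))‖ := by
        rw [(hf z).tsum_eq]
    _ ≤ ∑' n : ℕ, ‖a n * Complex.exp (2 * Real.pi * Complex.I * n * (z : ℂ))‖ :=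
        norm_tsum_le_tsum_norm hsum1
    _ ≤ ∑' n : ℕ, ‖a n‖ * rexp (-(2 * π) * z.im) := Summable.tsum_le_tsum hterm hsum1 hsum2
    _ = (∑' n : ℕ, ‖a n‖) * rexp (-(2 * π) * z.im) := tsum_mul_right

lemma tendsto_aux (m : ℤ) (c : ℝ) (hc : 0 < c) :
    Tendsto (fun y : ℝ => y ^ m * rexp (-(c / y))) (𝓝[>] (0 : ℝ)) (𝓝 0) := by
  have h1 : Tendsto (fun u : ℝ => u ^ (-m) * rexp (-(c * u))) atTop (𝓝 0) := by
    apply squeeze_zero' (g := fun u : ℝ => u ^ ((-m).toNat) * rexp (-(c * u)))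
    · filter_upwards [eventually_gt_atTop 0] with u hu
      positivity
    · filter_upwards [eventually_ge_atTop 1] with u hu
      refine mul_le_mul_of_nonneg_right ?_ (Real.exp_nonneg _)
      calc u ^ (-m) ≤ u ^ (((-m).toNat : ℤ)) := zpow_le_zpow_right₀ hu (Int.self_le_toNat _)
        _ = u ^ ((-m).toNat) := zpow_natCast u _
    · have h2 := tendsto_pow_mul_exp_neg_atTop_nhds_zero ((-m).toNat)
      have h3 : Tendsto (fun u : ℝ => c * u) atTop atTop :=
        Tendsto.const_mul_atTop hc tendsto_id
      have h4 := (h2.comp h3).const_mul ((c ^ ((-m).toNat))⁻¹)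
      rw [mul_zero] at h4
      refine h4.congr fun u => ?_
      simp only [Function.comp]
      rw [mul_pow, ← mul_assoc, ← mul_assoc,
        inv_mul_cancel₀ (pow_ne_zero _ hc.ne'), one_mul]
  have h6 := h1.comp tendsto_inv_nhdsGT_zero
  refine h6.congr fun y => ?_
  simp only [Function.comp]
  rw [inv_zpow, ← zpow_neg, neg_neg, div_eq_mul_inv]

lemma tendsto_fAt_rat {k : ℤ} (f : CuspForm (MonoidHom.range (Matrix.SpecialLinearGroup.mapGL ℝ : Matrix.SpecialLinearGroup (Fin 2) ℤ →* Matrix.GeneralLinearGroup (Fin 2) ℝ)) k) {a : ℕ → ℂ} (ha0 : a 0 = 0)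
    (hf : ∀ z : UpperHalfPlane,
      HasSum (fun n : ℕ => a n * Complex.exp (2 * Real.pi * Complex.I * n * z)) (f z))
    (hsum : Summable fun n => ‖a n‖) (r : ℚ) :
    Tendsto (fun y => fAt k f (r : ℝ) y) (𝓝[>] (0 : ℝ)) (𝓝 0) := by
  classical
  set S : ℝ := ∑' n : ℕ, ‖a n‖ with hS
  set A : ℤ := Int.gcdA r.num r.den with hA
  set B : ℤ := Int.gcdB r.num r.den with hB
  have hcop : Int.gcd r.num (r.den : ℤ) = 1 := by
    simpa [Int.gcd] using r.reduced
  have hg : (1 : ℤ) = r.num * A + (r.den : ℤ) * B := by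
    rw [hA, hB, ← Int.gcd_eq_gcd_ab, hcop]
    norm_num
  set γ : Matrix.SpecialLinearGroup (Fin 2) ℤ :=
    ⟨!![-A, -B; (r.den : ℤ), -r.num], by
      rw [Matrix.det_fin_two_of]
      linear_combination -hg⟩ with hγ
  have h10 : (γ 1 0 : ℤ) = (r.den : ℤ) := by
    show (!![-A, -B; ((r.den : ℤ)), -r.num] : Matrix (Fin 2) (Fin 2) ℤ) 1 0 = (r.den : ℤ)
    simp
  have h11 : (γ 1 1 : ℤ) = -r.num := by
    show (!![-A, -B; ((r.den : ℤ)), -r.num] : Matrix (Fin 2) (Fin 2) ℤ) 1 1 = -r.num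
    simp
  have hden_pos : (0 : ℝ) < (r.den : ℝ) := by exact_mod_cast r.den_pos
  have hdr : (r.den : ℝ) * (r : ℝ) = (r.num : ℝ) := by
    rw [Rat.cast_def]
    field_simp
  have key : ∀ y : ℝ, 0 < y → ‖fAt k f (r : ℝ) y‖ ≤
      ((r.den : ℝ) * y) ^ (-k) * (S * rexp (-(2 * π) * (1 / ((r.den : ℝ) ^ 2 * y)))) := by
    intro y hy
    set z : UpperHalfPlane := ⟨(r : ℝ) + Complex.I * y, by simpa using hy⟩ with hz
    have hfAt : fAt k f (r : ℝ) y = f z := dif_pos hy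
    have hdenval : ((γ 1 0 : ℤ) : ℂ) * (z : ℂ) + ((γ 1 1 : ℤ) : ℂ) =
        Complex.I * (((r.den : ℝ) * y : ℝ) : ℂ) := by
      rw [h10, h11, show ((z : ℂ)) = (r : ℝ) + Complex.I * y from rfl]
      have hdrC : ((r.den : ℝ) : ℂ) * ((r : ℝ) : ℂ) = ((r.num : ℝ) : ℂ) := by
        exact_mod_cast congrArg Complex.ofReal hdr
      push_cast
      push_cast at hdrC
      linear_combination hdrC
    have heqn : f (γ • z) = (((γ 1 0 : ℤ) : ℂ) * (z : ℂ) + ((γ 1 1 : ℤ) : ℂ)) ^ k * f z := by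
      have := SlashInvariantForm.slash_action_eqn' f
        (MonoidHom.mem_range.mpr ⟨γ, rfl⟩) z
      convert this using 4 <;> simp [Matrix.SpecialLinearGroup.mapGL]
    have hcpos : (0 : ℝ) < (r.den : ℝ) * y := by positivity
    have hnorm_pow : ‖(((γ 1 0 : ℤ) : ℂ) * (z : ℂ) + ((γ 1 1 : ℤ) : ℂ)) ^ k‖ =
        ((r.den : ℝ) * y) ^ k := by
      rw [hdenval, norm_zpow, norm_mul, Complex.norm_I, one_mul, Complex.norm_real,
        Real.norm_eq_abs, abs_of_pos hcpos]
    have h1 : ‖f z‖ = ((r.den : ℝ) * y) ^ (-k) * ‖f (γ • z)‖ := by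
      rw [heqn, norm_mul, hnorm_pow, zpow_neg, ← mul_assoc,
        inv_mul_cancel₀ (zpow_ne_zero _ hcpos.ne'), one_mul]
    have h2 : (γ • z).im = 1 / ((r.den : ℝ) ^ 2 * y) := by
      rw [ModularGroup.im_smul_eq_div_normSq, ModularGroup.denom_apply, hdenval]
      rw [show z.im = y by rw [hz]; simp [UpperHalfPlane.im]]
      rw [Complex.normSq_mul, Complex.normSq_I, one_mul, Complex.normSq_ofReal]
      rw [div_eq_div_iff (by positivity) (by positivity)]
      ring
    rw [hfAt, h1]
    refine mul_le_mul_of_nonneg_left ?_ (by positivity)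
    have := norm_f_le f ha0 hf hsum (γ • z)
    rwa [h2] at this
  have hlim : Tendsto (fun y : ℝ =>
      ((r.den : ℝ) * y) ^ (-k) * (S * rexp (-(2 * π) * (1 / ((r.den : ℝ) ^ 2 * y)))))
      (𝓝[>] (0 : ℝ)) (𝓝 0) := by
    have h0 := (tendsto_aux (-k) (2 * π / ((r.den : ℝ) ^ 2)) (by positivity)).const_mul
      (((r.den : ℝ)) ^ (-k) * S)
    rw [mul_zero] at h0
    refine h0.congr fun y => ?_
    rw [mul_zpow]
    rw [show -(2 * π / (r.den : ℝ) ^ 2 / y) = -(2 * π) * (1 / ((r.den : ℝ) ^ 2 * y)) by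
      rw [div_div]; ring]
    ring
  rw [tendsto_zero_iff_norm_tendsto_zero]
  apply squeeze_zero' (g := fun y : ℝ =>
      ((r.den : ℝ) * y) ^ (-k) * (S * rexp (-(2 * π) * (1 / ((r.den : ℝ) ^ 2 * y)))))
      ?_ ?_ hlim
  · filter_upwards with y using norm_nonneg _
  · filter_upwards [self_mem_nhdsWithin] with y hy
    exact key y hy

lemma tendsto_fAt_boundary {k : ℤ} (f : CuspForm (MonoidHom.range (Matrix.SpecialLinearGroup.mapGL ℝ : Matrix.SpecialLinearGroup (Fin 2) ℤ →* Matrix.GeneralLinearGroup (Fin 2) ℝ)) k) {a : ℕ → ℂ}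
    (hf : ∀ z : UpperHalfPlane,
      HasSum (fun n : ℕ => a n * Complex.exp (2 * Real.pi * Complex.I * n * z)) (f z))
    (hsum : Summable fun n => ‖a n‖) (x : ℝ) :
    Tendsto (fun y => fAt k f x y) (𝓝[>] (0 : ℝ)) (𝓝 (gfun a x)) := by
  have h := tendsto_tsum_of_dominated_convergence (𝓕 := 𝓝[>] (0 : ℝ))
    (f := fun (y : ℝ) (n : ℕ) =>
      a n * Complex.exp (2 * Real.pi * Complex.I * n * ((x : ℂ) + Complex.I * y)))
    (g := fun n : ℕ => a n * Complex.exp (2 * Real.pi * Complex.I * n * (x : ℂ)))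
    (bound := fun n => ‖a n‖) hsum ?_ ?_
  · refine Tendsto.congr' ?_ h
    filter_upwards [self_mem_nhdsWithin] with y hy
    have hy' : (0 : ℝ) < y := hy
    rw [fAt, dif_pos hy']
    exact (hf ⟨(x : ℂ) + Complex.I * y, by simpa using hy'⟩).tsum_eq
  · intro n
    refine (Continuous.tendsto' ?_ 0 _ ?_).mono_left nhdsWithin_le_nhds
    · fun_prop
    · norm_num
  · filter_upwards [self_mem_nhdsWithin] with y hy n
    have hy' : (0 : ℝ) < y := hy
    rw [norm_term]
    have him : ((x : ℂ) + Complex.I * y).im = y := by simp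
    rw [him]
    have : rexp (-(2 * π * n) * y) ≤ 1 := by
      rw [Real.exp_le_one_iff]
      have h2 : (0:ℝ) ≤ 2 * π * n * y := by positivity
      linarith
    calc ‖a n‖ * rexp (-(2 * π * n) * y) ≤ ‖a n‖ * 1 :=
          mul_le_mul_of_nonneg_left this (norm_nonneg _)
      _ = ‖a n‖ := mul_one _

lemma gfun_eq_zero {k : ℤ} (f : CuspForm (MonoidHom.range (Matrix.SpecialLinearGroup.mapGL ℝ : Matrix.SpecialLinearGroup (Fin 2) ℤ →* Matrix.GeneralLinearGroup (Fin 2) ℝ)) k) {a : ℕ → ℂ} (ha0 : a 0 = 0)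
    (hf : ∀ z : UpperHalfPlane,
      HasSum (fun n : ℕ => a n * Complex.exp (2 * Real.pi * Complex.I * n * z)) (f z))
    (hsum : Summable fun n => ‖a n‖) : ∀ x : ℝ, gfun a x = 0 := by
  have hcont : Continuous (gfun a) := by
    refine continuous_tsum (fun n => by fun_prop) hsum (fun n x => ?_)
    rw [norm_term]
    simp
  have hrat : ∀ q : ℚ, gfun a (q : ℝ) = 0 := fun q =>
    tendsto_nhds_unique (tendsto_fAt_boundary f hf hsum (q : ℝ))
      (tendsto_fAt_rat f ha0 hf hsum q)
  have : gfun a = fun _ => 0 := by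
    refine Continuous.ext_on (Rat.denseRange_cast (𝕜 := ℝ)) hcont continuous_const ?_
    rintro _ ⟨q, rfl⟩
    exact hrat q
  exact fun x => congrFun this x

lemma orth (l : ℤ) :
    ∫ x in Set.Ioc (0 : ℝ) 1, Complex.exp (2 * Real.pi * Complex.I * l * x) =
      if l = 0 then 1 else 0 := by
  rw [← intervalIntegral.integral_of_le (zero_le_one)]
  rcases eq_or_ne l 0 with h | h
  · simp [h]
  · rw [if_neg h]
    have hlc : ((l : ℂ)) ≠ 0 := Int.cast_ne_zero.mpr h
    have hc : (2 * (Real.pi : ℂ) * Complex.I * l) ≠ 0 :=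
      mul_ne_zero (mul_ne_zero (mul_ne_zero two_ne_zero
        (Complex.ofReal_ne_zero.mpr Real.pi_ne_zero)) Complex.I_ne_zero) hlc
    have := integral_exp_mul_complex hc (a := 0) (b := 1)
    rw [this]
    rw [show (2 * (Real.pi : ℂ) * Complex.I * l) * (1:ℝ) = (l : ℂ) * (2 * Real.pi * Complex.I)
      by push_cast; ring, Complex.exp_int_mul_two_pi_mul_I]
    norm_num

lemma coeff_eq_integral {k : ℤ} (f : CuspForm (MonoidHom.range (Matrix.SpecialLinearGroup.mapGL ℝ : Matrix.SpecialLinearGroup (Fin 2) ℤ →* Matrix.GeneralLinearGroup (Fin 2) ℝ)) k) {a : ℕ → ℂ}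
    (hf : ∀ z : UpperHalfPlane,
      HasSum (fun n : ℕ => a n * Complex.exp (2 * Real.pi * Complex.I * n * z)) (f z))
    (hsum : Summable fun n => ‖a n‖) (m : ℕ) {y : ℝ} (hy : 0 < y) :
    ∫ x in Set.Ioc (0 : ℝ) 1, fAt k f x y * Complex.exp (-(2 * Real.pi * Complex.I * m * x)) =
      a m * (rexp (-(2 * π * m) * y) : ℂ) := by
  set F : ℕ → ℝ → ℂ := fun n x =>
    a n * Complex.exp (2 * Real.pi * Complex.I * n * ((x : ℂ) + Complex.I * y)) *
      Complex.exp (-(2 * Real.pi * Complex.I * m * x)) with hF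
  have hnorm : ∀ (n : ℕ) (x : ℝ), ‖F n x‖ = ‖a n‖ * rexp (-(2 * π * n) * y) := by
    intro n x
    rw [hF]
    simp only
    rw [norm_mul, norm_term]
    have him : ((x : ℂ) + Complex.I * y).im = y := by simp
    rw [him]
    have h5 : ‖Complex.exp (-(2 * (Real.pi : ℂ) * Complex.I * m * x))‖ = 1 := by
      rw [Complex.norm_exp,
        show (-(2 * (Real.pi : ℂ) * Complex.I * m * x)).re = 0 by simp, Real.exp_zero]
    rw [h5, mul_one]
  have hF_int : ∀ n, Integrable (F n) (volume.restrict (Set.Ioc (0 : ℝ) 1)) := by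
    intro n
    apply Continuous.integrableOn_Ioc
    fun_prop
  have hF_sum : Summable fun n : ℕ => ∫ x in Set.Ioc (0 : ℝ) 1, ‖F n x‖ := by
    have hval : ∀ n : ℕ, ∫ x in Set.Ioc (0 : ℝ) 1, ‖F n x‖ = ‖a n‖ * rexp (-(2 * π * n) * y) := by
      intro n
      simp_rw [hnorm]
      rw [setIntegral_const]
      simp [Real.volume_Ioc]
    refine Summable.of_nonneg_of_le (fun n => ?_) (fun n => ?_) hsum
    · rw [hval n]; positivity
    · rw [hval n]
      have hle : rexp (-(2 * π * n) * y) ≤ 1 := by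
        rw [Real.exp_le_one_iff]
        have h2 : (0:ℝ) ≤ 2 * π * n * y := by positivity
        linarith
      calc ‖a n‖ * rexp (-(2 * π * n) * y) ≤ ‖a n‖ * 1 :=
            mul_le_mul_of_nonneg_left hle (norm_nonneg _)
        _ = ‖a n‖ := mul_one _
  have hsum_eq : ∀ x : ℝ,
      fAt k f x y * Complex.exp (-(2 * Real.pi * Complex.I * m * x)) = ∑' n : ℕ, F n x := by
    intro x
    rw [fAt, dif_pos hy,
      ← (hf ⟨(x : ℂ) + Complex.I * y, by simpa using hy⟩).tsum_eq, ← tsum_mul_right]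
  have hterm : ∀ n : ℕ, ∫ x in Set.Ioc (0 : ℝ) 1, F n x =
      (a n * Complex.exp (2 * Real.pi * Complex.I * n * (Complex.I * y))) *
        (if ((n : ℤ) - (m : ℤ)) = 0 then 1 else 0) := by
    intro n
    have hsplit : ∀ x : ℝ, F n x =
        (a n * Complex.exp (2 * Real.pi * Complex.I * n * (Complex.I * y))) *
          Complex.exp (2 * Real.pi * Complex.I * (((n : ℤ) - (m : ℤ) : ℤ) : ℂ) * x) := by
      intro x
      rw [hF]
      simp only
      have hexp : (2 * (Real.pi : ℂ) * Complex.I * n * ((x : ℂ) + Complex.I * y)) +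
          (-(2 * (Real.pi : ℂ) * Complex.I * m * x)) =
          (2 * (Real.pi : ℂ) * Complex.I * n * (Complex.I * y)) +
          (2 * (Real.pi : ℂ) * Complex.I * (((n : ℤ) - (m : ℤ) : ℤ) : ℂ) * x) := by
        push_cast
        ring
      rw [mul_assoc, ← Complex.exp_add, hexp, Complex.exp_add, ← mul_assoc]
    simp_rw [hsplit]
    rw [MeasureTheory.integral_const_mul]
    congr 1
    exact orth ((n : ℤ) - (m : ℤ))
  calc ∫ x in Set.Ioc (0 : ℝ) 1, fAt k f x y * Complex.exp (-(2 * Real.pi * Complex.I * m * x))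
      = ∫ x in Set.Ioc (0 : ℝ) 1, ∑' n : ℕ, F n x :=
        setIntegral_congr_fun measurableSet_Ioc (fun x _ => hsum_eq x)
    _ = ∑' n : ℕ, ∫ x in Set.Ioc (0 : ℝ) 1, F n x :=
        (integral_tsum_of_summable_integral_norm hF_int hF_sum).symm
    _ = a m * (rexp (-(2 * π * m) * y) : ℂ) := by
        rw [tsum_congr hterm, tsum_eq_single m ?_]
        · rw [sub_self, if_pos rfl, mul_one]
          congr 1
          rw [show 2 * (Real.pi : ℂ) * Complex.I * m * (Complex.I * y) =
            (Complex.I * Complex.I) * (2 * Real.pi * m * y) by ring, Complex.I_mul_I,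
            Complex.ofReal_exp]
          congr 1
          push_cast
          ring
        · intro n hnm
          rw [if_neg ?_, mul_zero]
          intro hzero
          exact hnm (by exact_mod_cast sub_eq_zero.mp hzero)

lemma coeff_zero {k : ℤ} (f : CuspForm (MonoidHom.range (Matrix.SpecialLinearGroup.mapGL ℝ : Matrix.SpecialLinearGroup (Fin 2) ℤ →* Matrix.GeneralLinearGroup (Fin 2) ℝ)) k) {a : ℕ → ℂ} (ha0 : a 0 = 0)
    (hf : ∀ z : UpperHalfPlane,
      HasSum (fun n : ℕ => a n * Complex.exp (2 * Real.pi * Complex.I * n * z)) (f z))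
    (hsum : Summable fun n => ‖a n‖) : ∀ m : ℕ, a m = 0 := by
  intro m
  have h1 : Tendsto (fun y : ℝ => a m * (rexp (-(2 * π * m) * y) : ℂ))
      (𝓝[>] (0 : ℝ)) (𝓝 (a m)) := by
    have hco : Continuous fun y : ℝ => a m * (rexp (-(2 * π * m) * y) : ℂ) := by fun_prop
    exact (hco.tendsto' 0 (a m) (by simp)).mono_left nhdsWithin_le_nhds
  have h2 : Tendsto (fun y : ℝ => ∫ x in Set.Ioc (0 : ℝ) 1,
      fAt k f x y * Complex.exp (-(2 * Real.pi * Complex.I * m * x)))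
      (𝓝[>] (0 : ℝ)) (𝓝 0) := by
    have h3 := tendsto_integral_filter_of_dominated_convergence
      (l := 𝓝[>] (0 : ℝ)) (μ := volume.restrict (Set.Ioc (0 : ℝ) 1))
      (F := fun (y : ℝ) (x : ℝ) =>
        fAt k f x y * Complex.exp (-(2 * Real.pi * Complex.I * m * x)))
      (f := fun _ : ℝ => (0 : ℂ)) (bound := fun _ : ℝ => (∑' n : ℕ, ‖a n‖)) ?_ ?_ ?_ ?_
    · simpa using h3
    · filter_upwards [self_mem_nhdsWithin] with y hy
      have hy' : (0 : ℝ) < y := hy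
      apply Continuous.aestronglyMeasurable
      have hc1 : Continuous fun x : ℝ => fAt k f x y := by
        have heq : (fun x : ℝ => fAt k f x y) = fun x : ℝ =>
            f ⟨(x : ℂ) + Complex.I * y, by simpa using hy'⟩ := by
          funext x
          rw [fAt, dif_pos hy']
        rw [heq]
        exact (f.holo'.continuous).comp (Continuous.upperHalfPlaneMk (by fun_prop) _)
      fun_prop
    · filter_upwards [self_mem_nhdsWithin] with y hy
      have hy' : (0 : ℝ) < y := hy
      refine Filter.Eventually.of_forall fun x => ?_
      have h5 : ‖Complex.exp (-(2 * (Real.pi : ℂ) * Complex.I * m * x))‖ = 1 := by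
        rw [Complex.norm_exp,
          show (-(2 * (Real.pi : ℂ) * Complex.I * m * x)).re = 0 by simp, Real.exp_zero]
      rw [norm_mul, h5, mul_one, fAt, dif_pos hy']
      refine le_trans (norm_f_le f ha0 hf hsum _) ?_
      have hgen : ∀ z : UpperHalfPlane,
          (∑' n : ℕ, ‖a n‖) * rexp (-(2 * π) * z.im) ≤ ∑' n : ℕ, ‖a n‖ := by
        intro z
        have him := z.im_pos
        have hle : rexp (-(2 * π) * z.im) ≤ 1 := by
          rw [Real.exp_le_one_iff]
          nlinarith [Real.pi_pos]
        have hSnn : (0:ℝ) ≤ ∑' n : ℕ, ‖a n‖ := tsum_nonneg fun n => norm_nonneg _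
        calc (∑' n : ℕ, ‖a n‖) * rexp (-(2 * π) * z.im) ≤ (∑' n : ℕ, ‖a n‖) * 1 :=
              mul_le_mul_of_nonneg_left hle hSnn
          _ = ∑' n : ℕ, ‖a n‖ := mul_one _
      exact hgen _
    · exact integrableOn_const measure_Ioc_lt_top.ne
    · refine Filter.Eventually.of_forall fun x => ?_
      have h6 := (tendsto_fAt_boundary f hf hsum x).mul_const
        (Complex.exp (-(2 * Real.pi * Complex.I * m * x)))
      rwa [gfun_eq_zero f ha0 hf hsum x, zero_mul] at h6
  have h7 : (fun y : ℝ => ∫ x in Set.Ioc (0 : ℝ) 1,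
      fAt k f x y * Complex.exp (-(2 * Real.pi * Complex.I * m * x)))
      =ᶠ[𝓝[>] (0 : ℝ)] fun y : ℝ => a m * (rexp (-(2 * π * m) * y) : ℂ) := by
    filter_upwards [self_mem_nhdsWithin] with y hy
    exact coeff_eq_integral f hf hsum m hy
  exact (tendsto_nhds_unique (Filter.Tendsto.congr' h7 h2) h1).symm ▸ rfl

end CuspFormMellinAux

/-- Let `f` be a cusp form of weight `k` for `SL₂(ℤ)` with Fourier coefficients `(a_n)_{n≥1}`
(so `f(z) = ∑_{n≥1} a_n e^{2πinz}` and `a₀ = 0`), and let `s` be a complex number such that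
`∑_{n≥1} |a_n| n^{-Re(s)}` converges. Then the Mellin integral `∫_0^∞ f(it) t^s dt/t`
converges and equals `(2π)^{-s} Γ(s) ∑_{n=1}^∞ a_n n^{-s}`. -/
theorem cuspForm_mellin_transform (k : ℤ) (f : CuspForm (MonoidHom.range (Matrix.SpecialLinearGroup.mapGL ℝ : Matrix.SpecialLinearGroup (Fin 2) ℤ →* Matrix.GeneralLinearGroup (Fin 2) ℝ)) k) (a : ℕ → ℂ) (s : ℂ)
    (ha0 : a 0 = 0)
    (hf : ∀ z : UpperHalfPlane,
      HasSum (fun n : ℕ => a n * Complex.exp (2 * Real.pi * Complex.I * n * z)) (f z))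
    (hs : Summable fun n : ℕ => ‖a n‖ * (n : ℝ) ^ (-s.re)) :
    IntegrableOn (fun t : ℝ => cuspFormOnImaginaryAxis k f t * (t : ℂ) ^ (s - 1))
        (Set.Ioi 0) ∧
      ∫ t in Set.Ioi (0 : ℝ), cuspFormOnImaginaryAxis k f t * (t : ℂ) ^ (s - 1) =
        (2 * Real.pi : ℂ) ^ (-s) * Complex.Gamma s * ∑' n : ℕ, a n * (n : ℂ) ^ (-s) := by
  rcases lt_or_ge 0 s.re with hs0 | hs0
  · exact CuspFormMellinAux.main_pos k f a s ha0 hf hs hs0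
  · have hsum : Summable fun n : ℕ => ‖a n‖ := by
      refine Summable.of_nonneg_of_le (fun n => norm_nonneg _) (fun n => ?_) hs
      rcases Nat.eq_zero_or_pos n with h | h
      · simp [h, ha0]
      have h1 : (1 : ℝ) ≤ n := by exact_mod_cast h
      have h2 : (1 : ℝ) ≤ (n : ℝ) ^ (-s.re) := by
        have h3 := Real.rpow_le_rpow_of_exponent_le h1 (neg_nonneg.mpr hs0 : (0:ℝ) ≤ -s.re)
        rwa [Real.rpow_zero] at h3
      calc ‖a n‖ = ‖a n‖ * 1 := by rw [mul_one]
        _ ≤ ‖a n‖ * (n : ℝ) ^ (-s.re) :=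
            mul_le_mul_of_nonneg_left h2 (norm_nonneg _)
    have hvan := CuspFormMellinAux.coeff_zero f ha0 hf hsum
    have hzero : ∀ t ∈ Set.Ioi (0:ℝ),
        cuspFormOnImaginaryAxis k f t * (t : ℂ) ^ (s - 1) = 0 := by
      intro t ht
      have ht' : (0:ℝ) < t := ht
      have hfz : f (⟨Complex.I * t, by simpa using ht'⟩) = 0 := by
        have h0 : HasSum (fun _ : ℕ => (0 : ℂ)) (f ⟨Complex.I * t, by simpa using ht'⟩) := by
          have := hf ⟨Complex.I * t, by simpa using ht'⟩
          simpa [hvan] using this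
        exact (h0.unique hasSum_zero)
      rw [cuspFormOnImaginaryAxis, dif_pos ht', hfz, zero_mul]
    constructor
    · exact (integrableOn_zero).congr_fun (fun t ht => (hzero t ht).symm) measurableSet_Ioi
    · rw [setIntegral_congr_fun measurableSet_Ioi (fun t ht => hzero t ht)]
      simp [hvan]
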